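/- A subset B of [m+r] with |B| = r is a basis of the lattice path matroid M[P,Q] if and only if the lattice path P(B) associated with B stays in the region bounded by P and Q (never goes below P nor above Q). -/

import Mathlib

open Matroid

/-- Steps: `true` is a North step, `false` is an East step. -/
def nCount (w : List Bool) : ℕ := w.count true

def eCount (w : List Bool) : ℕ := w.count false

/-- `P` and `Q` are lattice paths from `(0,0)` to `(m,r)` with `P` never above `Q`. -/
structure IsLatticePair (P Q : List Bool) (m r : ℕ) : Prop where
  lenP : P.length = m + r
  lenQ : Q.length = m + r
  northP : nCount P = r
  northQ : nCount Q = r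
  notAbove : ∀ i, nCount (P.take i) ≤ nCount (Q.take i)

/-- The (1-indexed) positions of the North steps of a path. -/
def northPositions (w : List Bool) : List ℕ :=
  ((List.range w.length).filter (fun j => w.getD j false)).map (· + 1)

/-- `X` is a partial transversal of the intervals `N_i = [l_i, u_i]`, `i < r`, where
`u_i` (resp. `l_i`) is the position of the `i`-th North step of `P` (resp. `Q`). -/
def IsPartialTransversal (P Q : List Bool) (r : ℕ) (X : Set ℕ) : Prop :=
  ∃ f : ℕ → ℕ, Set.InjOn f X ∧ ∀ x ∈ X, f x < r ∧
    (northPositions Q).getD (f x) 0 ≤ x ∧ x ≤ (northPositions P).getD (f x) 0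

/-- `M` is the lattice path matroid `M[P,Q]`: the transversal matroid on `[m+r]`
whose independent sets are the partial transversals of the intervals `N_i`. -/
def IsLPM (M : Matroid ℕ) (P Q : List Bool) (m r : ℕ) : Prop :=
  IsLatticePair P Q m r ∧ M.E = Set.Icc 1 (m + r) ∧
    ∀ X : Set ℕ, M.Indep X ↔ X ⊆ M.E ∧ IsPartialTransversal P Q r X

/-- `[P,Q]` has a `k × k` square at `i`: the length-`i` prefix of `P` has exactly `k`
more East steps than that of `Q`, and the prefix of `Q` has `k` more North steps. -/
def HasSquareAt (P Q : List Bool) (k i : ℕ) : Prop :=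
  eCount (P.take i) = eCount (Q.take i) + k ∧ nCount (Q.take i) = nCount (P.take i) + k

/-- The square-width of a presentation: the largest `k` such that it has a `k × k` square. -/
noncomputable def squareWidth (P Q : List Bool) : ℕ :=
  sSup {k | ∃ i, HasSquareAt P Q k i}

/-- `N` is a minor of `M`: obtained by contracting a set `C` and deleting a set `D`. -/
def IsMinorOf {α : Type*} (N M : Matroid α) : Prop :=
  ∃ C D : Set α, C ⊆ M.E ∧ D ⊆ M.E ∧ Disjoint C D ∧
    N = ((M✶ ↾ (M.E \ C))✶) ↾ ((M.E \ C) \ D)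

/-- An isomorphism between matroids: a bijection of ground sets preserving independence. -/
def MatroidIso {α β : Type*} (M : Matroid α) (N : Matroid β) : Prop :=
  ∃ f : α → β, Set.BijOn f M.E N.E ∧ ∀ X ⊆ M.E, (M.Indep X ↔ N.Indep (f '' X))

/-- `N` is isomorphic to a minor of `M`. -/
def IsIsoMinorOf {α β : Type*} (N : Matroid α) (M : Matroid β) : Prop :=
  ∃ N' : Matroid β, IsMinorOf N' M ∧ MatroidIso N' N

/-- `M` is (isomorphic to) the uniform matroid `U_{r,n}`. -/
def IsUniform {α : Type*} (M : Matroid α) (r n : ℕ) : Prop :=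
  M.E.encard = (n : ℕ∞) ∧ ∀ X ⊆ M.E, (M.Indep X ↔ X.encard ≤ (r : ℕ∞))

/-- The rank (in `ℕ∞`) of a set in a matroid. -/
noncomputable def eRk {α : Type*} (M : Matroid α) (A : Set α) : ℕ∞ :=
  ⨆ I : {I : Set α // M.Indep I ∧ I ⊆ A}, (I : Set α).encard

/-- Binary trees, used to model the cubic trees of branch decompositions. -/
inductive BTree (α : Type*) where
  | leaf : α → BTree α
  | node : BTree α → BTree α → BTree α

def BTree.leafList {α : Type*} : BTree α → List α
  | .leaf a => [a]
  | .node l r => l.leafList ++ r.leafList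

def BTree.subtrees {α : Type*} : BTree α → List (BTree α)
  | .leaf a => [.leaf a]
  | .node l r => .node l r :: (l.subtrees ++ r.subtrees)

/-- The connectivity value `λ(A) = r(A) + r(E \ A) − r(E) + 1`. -/
noncomputable def lamVal {α : Type*} (M : Matroid α) (A : Set α) : ℕ∞ :=
  _root_.eRk M A + _root_.eRk M (M.E \ A) - _root_.eRk M M.E + 1

/-- A branch decomposition of `M`: a (cubic) tree whose leaves are bijectively
labelled by the elements of `M`. -/
def IsBranchDecomp {α : Type*} (M : Matroid α) (t : BTree α) : Prop :=
  t.leafList.Nodup ∧ {x | x ∈ t.leafList} = M.E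

/-- The width of a branch decomposition: the maximum of `λ` over the edges
(equivalently, over the leaf sets of the subtrees). -/
noncomputable def decompWidth {α : Type*} (M : Matroid α) (t : BTree α) : ℕ∞ :=
  (t.subtrees.map (fun s => lamVal M {x | x ∈ s.leafList})).foldr max 0

/-- The branch-width of a matroid. -/
noncomputable def branchWidth {α : Type*} (M : Matroid α) : ℕ∞ :=
  sInf {w | ∃ t : BTree α, IsBranchDecomp M t ∧ decompWidth M t = w}

/-- The lattice path `P(X)` associated to a subset `X` of `[len]`. -/
noncomputable def pathWord (X : Set ℕ) (len : ℕ) : List Bool :=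
  (List.range len).map (fun j => @decide ((j + 1) ∈ X) (Classical.propDecidable _))

def glue (PB QB PT QT : List Bool) (k : ℕ) : List Bool × List Bool :=
  (PB.take (PB.length - k) ++ PT.drop k, QB.take (QB.length - k) ++ QT.drop k)


section LPMAux

lemma np_cons (a : Bool) (t : List Bool) :
    northPositions (a :: t) = (if a then [1] else []) ++ (northPositions t).map (· + 1) := by
  unfold northPositions
  rw [List.length_cons, List.range_succ_eq_map, List.filter_cons, List.filter_map]
  have h1 : ((a :: t).getD 0 false) = a := rfl
  have h2 : ((fun j => (a :: t).getD j false) ∘ (· + 1)) = fun j => t.getD j false := by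
    funext j; simp [List.getD_cons_succ]
  rw [h1, h2]
  cases a <;> simp [List.map_map, Function.comp_def]

lemma mem_np {w : List Bool} {x : ℕ} :
    x ∈ northPositions w ↔ 1 ≤ x ∧ x - 1 < w.length ∧ w.getD (x - 1) false = true := by
  unfold northPositions
  simp only [List.mem_map, List.mem_filter, List.mem_range]
  constructor
  · rintro ⟨y, ⟨hy, hq⟩, rfl⟩
    refine ⟨by omega, by simpa using hy, ?_⟩
    simpa using hq
  · rintro ⟨h1, h2, h3⟩
    exact ⟨x - 1, ⟨h2, by simpa using h3⟩, by omega⟩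

lemma np_sorted (w : List Bool) : (northPositions w).Pairwise (· < ·) := by
  induction w with
  | nil => simp [northPositions]
  | cons a t ih =>
    rw [np_cons]
    have hmap : ((northPositions t).map (· + 1)).Pairwise (· < ·) :=
      List.Pairwise.map (· + 1) (fun a b h => by simpa using h) ih
    cases a with
    | false => simpa using hmap
    | true =>
      simp only [if_pos, List.singleton_append, List.pairwise_cons]
      refine ⟨?_, hmap⟩
      intro b hb
      rcases List.mem_map.mp hb with ⟨y, hy, rfl⟩
      have := (mem_np.mp hy).1
      omega

lemma bridge (w : List Bool) (j : ℕ) :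
    nCount (w.take j) = ((northPositions w).filter (fun p => p ≤ j)).length := by
  induction w generalizing j with
  | nil => simp [northPositions, nCount]
  | cons a t ih =>
    rw [np_cons, List.filter_append, List.length_append, List.filter_map]
    cases j with
    | zero =>
      simp only [List.take_zero]
      have h1 : ∀ x ∈ northPositions t, ¬ ((fun p => decide (p ≤ 0)) ∘ (· + 1)) x = true := by
        intro x _; simp
      rw [List.filter_eq_nil_iff.mpr h1]
      cases a <;> simp [nCount]
    | succ n =>
      have h2 : ((fun p => decide (p ≤ n + 1)) ∘ (· + 1)) = fun p => decide (p ≤ n) := by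
        funext p; simp
      rw [h2, List.take_succ_cons]
      have h3 : nCount (a :: t.take n) = (if a then 1 else 0) + nCount (t.take n) := by
        cases a <;> simp [nCount] <;> omega
      rw [h3, ih n, List.length_map]
      cases a <;> simp

lemma helper1 {L : List ℕ} (hs : L.Pairwise (· < ·)) {i : ℕ} (hi : i < L.length) (j : ℕ) :
    i + 1 ≤ (L.filter (fun p => p ≤ j)).length ↔ L.getD i 0 ≤ j := by
  induction L generalizing i with
  | nil => simp at hi
  | cons a t ih =>
    have hat : ∀ x ∈ t, a < x := fun x hx => (List.pairwise_cons.mp hs).1 x hx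
    rw [List.filter_cons]
    by_cases haj : a ≤ j
    · simp only [if_pos (by simpa using haj : decide (a ≤ j) = true), List.length_cons]
      cases i with
      | zero => simpa using haj
      | succ n =>
        have hn : n < t.length := by simpa using hi
        rw [List.getD_cons_succ]
        have := ih (List.pairwise_cons.mp hs).2 hn
        omega
    · simp only [if_neg (by simpa using haj : ¬ decide (a ≤ j) = true)]
      have hft : t.filter (fun p => p ≤ j) = [] := by
        apply List.filter_eq_nil_iff.mpr
        intro x hx
        have := hat x hx; simp; omega
      rw [hft]
      simp only [List.length_nil]
      constructor
      · omega
      · intro hle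
        exfalso
        cases i with
        | zero => simp at hle; omega
        | succ n =>
          rw [List.getD_cons_succ] at hle
          have hn : n < t.length := by simpa using hi
          rw [List.getD_eq_getElem t 0 hn] at hle
          have hmem : t[n] ∈ t := List.getElem_mem hn
          have := hat _ hmem
          omega

lemma np_le_len {w : List Bool} {x : ℕ} (hx : x ∈ northPositions w) : x ≤ w.length := by
  have := mem_np.mp hx; omega

lemma np_length (w : List Bool) : (northPositions w).length = nCount w := by
  have h := bridge w w.length
  rw [List.take_length] at h
  rw [h, List.filter_eq_self.mpr]
  intro x hx
  simpa using np_le_len hx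

lemma cnt_le (w : List Bool) (j : ℕ) : nCount (w.take j) ≤ nCount w :=
  (List.take_sublist j w).count_le true

lemma F2 {w : List Bool} {i : ℕ} (hi : i < nCount w) (j : ℕ) :
    (northPositions w).getD i 0 ≤ j ↔ i + 1 ≤ nCount (w.take j) := by
  rw [bridge]
  exact (helper1 (np_sorted w) (by rw [np_length]; exact hi) j).symm

lemma pw_length (X : Set ℕ) (n : ℕ) : (pathWord X n).length = n := by simp [pathWord]

lemma pw_getD (X : Set ℕ) {n i : ℕ} (hi : i < n) :
    (pathWord X n).getD i false = @decide ((i + 1) ∈ X) (Classical.propDecidable _) := by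
  rw [pathWord, List.getD_eq_getElem _ _ (by simpa using hi)]
  simp

lemma mem_np_pw {B : Set ℕ} {n x : ℕ} (hBE : B ⊆ Set.Icc 1 n) :
    x ∈ northPositions (pathWord B n) ↔ x ∈ B := by
  rw [mem_np, pw_length]
  constructor
  · rintro ⟨h1, h2, h3⟩
    rw [pw_getD B h2] at h3
    have : x - 1 + 1 ∈ B := @of_decide_eq_true _ (Classical.propDecidable _) h3
    rwa [Nat.sub_add_cancel h1] at this
  · intro hx
    have hx2 := hBE hx
    simp only [Set.mem_Icc] at hx2
    refine ⟨hx2.1, by omega, ?_⟩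
    rw [pw_getD B (by omega)]
    have : x - 1 + 1 = x := by omega
    rw [this]
    exact @decide_eq_true _ (Classical.propDecidable _) hx

lemma nCount_pw {B : Set ℕ} {n r : ℕ} (hBE : B ⊆ Set.Icc 1 n) (hcard : B.encard = (r : ℕ∞)) :
    nCount (pathWord B n) = r := by
  have hnd : (northPositions (pathWord B n)).Nodup := (np_sorted _).nodup
  have hset : B = ↑(northPositions (pathWord B n)).toFinset := by
    ext x
    simp [List.mem_toFinset, mem_np_pw hBE]
  rw [hset, Set.encard_coe_eq_coe_finsetCard, List.toFinset_card_of_nodup hnd, np_length] at hcard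
  exact_mod_cast hcard

lemma np_strictmono {w : List Bool} {i j : ℕ} (hij : i < j) (hj : j < nCount w) :
    (northPositions w).getD i 0 < (northPositions w).getD j 0 := by
  have hj' : j < (northPositions w).length := by rw [np_length]; exact hj
  have hi' : i < (northPositions w).length := by omega
  rw [List.getD_eq_getElem _ _ hi', List.getD_eq_getElem _ _ hj']
  exact (List.Pairwise.sortedLT (np_sorted w)).strictMono_get (show (⟨i, hi'⟩ : Fin _) < ⟨j, hj'⟩ from hij)

lemma cnt_mono_iff {w₁ w₂ : List Bool} {r : ℕ} (h1 : nCount w₁ = r) (h2 : nCount w₂ = r) :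
    (∀ j, nCount (w₁.take j) ≤ nCount (w₂.take j)) ↔
      ∀ i < r, (northPositions w₂).getD i 0 ≤ (northPositions w₁).getD i 0 := by
  constructor
  · intro h i hi
    have hi1 : i < nCount w₁ := by omega
    have hi2 : i < nCount w₂ := by omega
    rw [F2 hi2]
    refine le_trans ?_ (h _)
    rw [← F2 hi1]
  · intro h j
    set k := nCount (w₁.take j) with hk
    rcases Nat.eq_zero_or_pos k with h0 | h0
    · omega
    · have hkr : k ≤ r := h1 ▸ cnt_le w₁ j
      have hi : k - 1 < r := by omega
      have hi1 : k - 1 < nCount w₁ := by omega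
      have hi2 : k - 1 < nCount w₂ := by omega
      have e1 : (northPositions w₁).getD (k-1) 0 ≤ j := by
        rw [F2 hi1]; omega
      have e2 : (northPositions w₂).getD (k-1) 0 ≤ j := le_trans (h _ hi) e1
      rw [F2 hi2] at e2
      omega

section
variable {P Q : List Bool} {B : Set ℕ} {n r : ℕ}

lemma np_mono {w : List Bool} {i j : ℕ} (hij : i ≤ j) (hj : j < nCount w) :
    (northPositions w).getD i 0 ≤ (northPositions w).getD j 0 := by
  rcases eq_or_lt_of_le hij with rfl | h
  · exact le_refl _
  · exact le_of_lt (np_strictmono h hj)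

lemma b_mem (hBE : B ⊆ Set.Icc 1 n) (hB : nCount (pathWord B n) = r) {i : ℕ} (hi : i < r) :
    (northPositions (pathWord B n)).getD i 0 ∈ B := by
  have hl : i < (northPositions (pathWord B n)).length := by rw [np_length, hB]; exact hi
  rw [← mem_np_pw hBE, List.getD_eq_getElem _ _ hl]
  exact List.getElem_mem hl

lemma mem_eq_b (hBE : B ⊆ Set.Icc 1 n) (hB : nCount (pathWord B n) = r) {x : ℕ} (hx : x ∈ B) :
    ∃ i < r, (northPositions (pathWord B n)).getD i 0 = x := by
  have : x ∈ northPositions (pathWord B n) := (mem_np_pw hBE).mpr hx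
  rcases List.mem_iff_get.mp this with ⟨⟨i, hl⟩, hg⟩
  refine ⟨i, by rw [np_length, hB] at hl; exact hl, ?_⟩
  rw [List.getD_eq_getElem _ _ hl]
  exact hg

lemma f_of_b (hB : nCount (pathWord B n) = r) {i : ℕ} (hi : i < r) :
    nCount ((pathWord B n).take ((northPositions (pathWord B n)).getD i 0)) = i + 1 := by
  set wB := pathWord B n
  set b := (northPositions wB).getD i 0
  have hi' : i < nCount wB := by omega
  have hge : i + 1 ≤ nCount (wB.take b) := (F2 hi' b).mp (le_refl b)
  have hle : nCount (wB.take b) ≤ i + 1 := by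
    by_contra hcon
    push_neg at hcon
    by_cases hsucc : i + 1 < r
    · have := (F2 (show i + 1 < nCount wB by omega) b).mpr (by omega)
      have := np_strictmono (show i < i + 1 by omega) (show i + 1 < nCount wB by omega)
      omega
    · have := cnt_le wB b
      omega
  omega

theorem transversal_iff (hBE : B ⊆ Set.Icc 1 n) (hB : nCount (pathWord B n) = r)
    (hP : nCount P = r) (hQ : nCount Q = r) :
    IsPartialTransversal P Q r B ↔
      ∀ i < r, (northPositions Q).getD i 0 ≤ (northPositions (pathWord B n)).getD i 0 ∧
        (northPositions (pathWord B n)).getD i 0 ≤ (northPositions P).getD i 0 := by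
  set wB := pathWord B n with hwB
  set b : ℕ → ℕ := fun i => (northPositions wB).getD i 0 with hb
  constructor
  · rintro ⟨f, hinj, hf⟩ i hi
    have hbmem : ∀ j < r, b j ∈ B := fun j hj => b_mem hBE hB hj
    have hbinj : ∀ j k, j < r → k < r → b j = b k → j = k := by
      intro j k hj hk he
      by_contra hne
      have hbeq : ∀ l, b l = (northPositions wB).getD l 0 := fun _ => rfl
      rcases Nat.lt_or_ge j k with h | h
      · have h2 := np_strictmono h (by omega : k < nCount wB)
        rw [← hbeq, ← hbeq] at h2; omega
      · have hlt : k < j := by omega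
        have h2 := np_strictmono hlt (by omega : j < nCount wB)
        rw [← hbeq, ← hbeq] at h2; omega
    constructor
    · -- lower: posQ i ≤ b i, find j ≤ i with f (b j) ≥ i
      have hex : ∃ j ≤ i, i ≤ f (b j) := by
        by_contra hcon
        push_neg at hcon
        have hsub : (Finset.range (i+1)).image (fun j => f (b j)) ⊆ Finset.range i := by
          intro x hx
          rcases Finset.mem_image.mp hx with ⟨j, hj, rfl⟩
          simp only [Finset.mem_range] at hj ⊢
          exact hcon j (by omega)
        have hcard : ((Finset.range (i+1)).image (fun j => f (b j))).card = i + 1 := by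
          rw [Finset.card_image_of_injOn, Finset.card_range]
          intro j hj k hk he
          simp only [Finset.coe_range, Set.mem_Iio] at hj hk
          exact hbinj j k (by omega) (by omega)
            (hinj (hbmem j (by omega)) (hbmem k (by omega)) he)
        have := Finset.card_le_card hsub
        rw [hcard, Finset.card_range] at this
        omega
      rcases hex with ⟨j, hji, hfj⟩
      have h1 := hf (b j) (hbmem j (by omega))
      calc (northPositions Q).getD i 0 ≤ (northPositions Q).getD (f (b j)) 0 :=
            np_mono hfj (by omega)
        _ ≤ b j := h1.2.1
        _ ≤ b i := np_mono hji (by omega)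
    · -- upper: b i ≤ posP i, find j ∈ [i, r) with f (b j) ≤ i
      have hex : ∃ j, i ≤ j ∧ j < r ∧ f (b j) ≤ i := by
        by_contra hcon
        push_neg at hcon
        have hsub : (Finset.Ico i r).image (fun j => f (b j)) ⊆ Finset.Ico (i+1) r := by
          intro x hx
          rcases Finset.mem_image.mp hx with ⟨j, hj, rfl⟩
          simp only [Finset.mem_Ico] at hj ⊢
          have h1 := hcon j hj.1 hj.2
          have h2 := (hf (b j) (hbmem j hj.2)).1
          omega
        have hcard : ((Finset.Ico i r).image (fun j => f (b j))).card = r - i := by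
          rw [Finset.card_image_of_injOn, Nat.card_Ico]
          intro j hj k hk he
          simp only [Finset.coe_Ico, Set.mem_Ico] at hj hk
          exact hbinj j k hj.2 hk.2 (hinj (hbmem j hj.2) (hbmem k hk.2) he)
        have := Finset.card_le_card hsub
        rw [hcard, Nat.card_Ico] at this
        omega
      rcases hex with ⟨j, hij, hjr, hfj⟩
      have h1 := hf (b j) (hbmem j hjr)
      calc b i ≤ b j := np_mono hij (by omega)
        _ ≤ (northPositions P).getD (f (b j)) 0 := h1.2.2
        _ ≤ (northPositions P).getD i 0 := np_mono hfj (by omega)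
  · intro h
    refine ⟨fun x => nCount (wB.take x) - 1, ?_, ?_⟩
    · intro x hx y hy he
      rcases mem_eq_b hBE hB hx with ⟨i, hi, rfl⟩
      rcases mem_eq_b hBE hB hy with ⟨j, hj, rfl⟩
      have hfx := f_of_b hB hi
      have hfy := f_of_b hB hj
      simp only at he
      rw [hfx, hfy] at he
      have : i = j := by omega
      rw [this]
    · intro x hx
      rcases mem_eq_b hBE hB hx with ⟨i, hi, rfl⟩
      have hfx := f_of_b hB hi
      simp only [hwB, hfx]
      have : i + 1 - 1 = i := by omega
      rw [this]
      exact ⟨hi, (h i hi).1, (h i hi).2⟩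
end


/-- A subset `B` of `[m+r]` with `|B| = r` is a basis of the lattice path matroid
`M[P,Q]` if and only if the associated lattice path `P(B)` stays in the region
bounded by `P` and `Q` (never below `P` nor above `Q`). -/
theorem stmt_19 (P Q : List Bool) (m r : ℕ) (M : Matroid ℕ)
    (hM : IsLPM M P Q m r) (B : Set ℕ) (hBE : B ⊆ Set.Icc 1 (m + r))
    (hcard : B.encard = (r : ℕ∞)) :
    M.IsBase B ↔ ∀ j, nCount (P.take j) ≤ nCount ((pathWord B (m + r)).take j) ∧
      nCount ((pathWord B (m + r)).take j) ≤ nCount (Q.take j) := by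
  obtain ⟨hpair, hE, hindep⟩ := hM
  have hBcnt : nCount (pathWord B (m + r)) = r := nCount_pw hBE hcard
  have hBM : B ⊆ M.E := by rw [hE]; exact hBE
  have hrank : ∀ X, M.Indep X → X.encard ≤ (r : ℕ∞) := by
    intro X hX
    obtain ⟨-, f, hinj, hf⟩ := (hindep X).mp hX
    calc X.encard = (f '' X).encard := (hinj.encard_image).symm
      _ ≤ (↑(Finset.range r) : Set ℕ).encard := by
          refine Set.encard_mono ?_
          rintro y ⟨x, hx, rfl⟩
          simp only [Finset.coe_range, Set.mem_Iio]
          exact (hf x hx).1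
      _ = (r : ℕ∞) := by rw [Set.encard_coe_eq_coe_finsetCard, Finset.card_range]
  have hbase : M.IsBase B ↔ M.Indep B := by
    constructor
    · exact fun h => h.indep
    · intro h
      rw [Matroid.isBase_iff_maximal_indep]
      refine ⟨h, fun I hI hBI => ?_⟩
      have hfin : B.Finite := Set.finite_of_encard_eq_coe hcard
      have : B = I :=
        hfin.eq_of_subset_of_encard_le hBI (by rw [hcard]; exact hrank I hI)
      exact this.symm.le
  have key : IsPartialTransversal P Q r B ↔
      (∀ j, nCount (P.take j) ≤ nCount ((pathWord B (m + r)).take j)) ∧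
      (∀ j, nCount ((pathWord B (m + r)).take j) ≤ nCount (Q.take j)) := by
    rw [transversal_iff hBE hBcnt hpair.northP hpair.northQ,
        cnt_mono_iff hpair.northP hBcnt, cnt_mono_iff hBcnt hpair.northQ]
    constructor
    · intro h
      exact ⟨fun i hi => (h i hi).2, fun i hi => (h i hi).1⟩
    · intro h i hi
      exact ⟨h.2 i hi, h.1 i hi⟩
  rw [hbase, hindep B]
  constructor
  · rintro ⟨-, ht⟩
    have := key.mp ht
    exact fun j => ⟨this.1 j, this.2 j⟩
  · intro h
    exact ⟨hBM, key.mpr ⟨fun j => (h j).1, fun j => (h j).2⟩⟩
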